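/- arXiv:1005.4362 — 2 statements merged into one kernel-verified Lean document; each statement's English description precedes it below -/
import Mathlib

section
/- Let a > 0, μ_O, μ_I > 0 and fix η with ‖η‖ > a. The regular part h^{O,O}(ξ,η) = −(1/(2πμ_O)) ((μ_I−μ_O)/(μ_I+μ_O)) log( ‖ξ − (a²/‖η‖²)η‖ / ‖ξ‖ ) satisfies the asymptotic estimate: there is a constant C (depending on a, μ_O, μ_I) such that for all ‖ξ‖ ≥ 2a and ‖η‖ ≥ a, | h^{O,O}(ξ,η) + D^O(η) · ∇_ξ((1/(2πμ_O)) log(1/‖ξ‖)) | ≤ C / (‖ξ‖² (1+‖η‖)), where D^O(η) = ((μ_I−μ_O)/(μ_I+μ_O)) (a²/‖η‖²) η and ∇_ξ log(1/‖ξ‖) = −ξ/‖ξ‖². -/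
open Real

lemma log_sub_bound_aux {t : ℝ} (h : (1:ℝ)/4 ≤ 1 + t) :
    |Real.log (1 + t) - t| ≤ 4 * t ^ 2 := by
  have h0 : 0 < 1 + t := by linarith
  have h1 : Real.log (1 + t) ≤ t := by
    have := Real.log_le_sub_one_of_pos h0; linarith
  have h2 : 1 - 1 / (1 + t) ≤ Real.log (1 + t) := by
    have h3 := Real.log_le_sub_one_of_pos (x := (1 + t)⁻¹) (by positivity)
    rw [Real.log_inv] at h3
    have : (1 + t)⁻¹ = 1 / (1 + t) := by ring
    linarith [h3, this ▸ h3]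
  rw [abs_sub_comm, abs_of_nonneg (by linarith)]
  have key : t - (1 - 1 / (1 + t)) = t ^ 2 / (1 + t) := by
    field_simp; ring
  have hb : t ^ 2 / (1 + t) ≤ 4 * t ^ 2 := by
    rw [div_le_iff₀ h0]; nlinarith [sq_nonneg t]
  linarith

set_option maxHeartbeats 1000000 in
/-- Far-field dipole expansion of the regular part `h^{O,O}` of the transmission
Green's function for a circular inclusion: there is `C > 0` (depending on `a, μO, μI`)
such that for `‖ξ‖ ≥ 2a`, `‖η‖ ≥ a`,
`| h^{O,O}(ξ,η) + D^O(η)·∇_ξ((1/(2πμO)) log(1/‖ξ‖)) | ≤ C/(‖ξ‖²(1+‖η‖))`,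
where `∇_ξ log(1/‖ξ‖) = −ξ/‖ξ‖²`. -/
theorem stmt11 (a μO μI : ℝ) (ha : 0 < a) (hμO : 0 < μO) (hμI : 0 < μI) :
    ∃ C : ℝ, 0 < C ∧ ∀ ξ η : EuclideanSpace ℝ (Fin 2), 2 * a ≤ ‖ξ‖ → a ≤ ‖η‖ →
      |(-(1 / (2 * π * μO)) * ((μI - μO) / (μI + μO)) *
            Real.log (‖ξ - (a ^ 2 / ‖η‖ ^ 2) • η‖ / ‖ξ‖))
          + (inner ℝ ((((μI - μO) / (μI + μO)) * (a ^ 2 / ‖η‖ ^ 2)) • η)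
              ((-(1 / (2 * π * μO)) / ‖ξ‖ ^ 2) • ξ) : ℝ)|
        ≤ C / (‖ξ‖ ^ 2 * (1 + ‖η‖)) := by
  set r : ℝ := (μI - μO) / (μI + μO) with hr
  set K : ℝ := 1 / (2 * π * μO) with hK
  set c : ℝ := |K * r| * (37 / 2) with hc
  refine ⟨c * a ^ 2 * (1 + a) + 1, by positivity, ?_⟩
  intro ξ η hξ hη
  set n : ℝ := ‖ξ‖ with hn
  set m : ℝ := ‖η‖ with hm
  have hm0 : 0 < m := lt_of_lt_of_le ha hη
  have hn0 : 0 < n := by linarith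
  set b : EuclideanSpace ℝ (Fin 2) := (a ^ 2 / m ^ 2) • η with hb
  have hB : ‖b‖ = a ^ 2 / m := by
    rw [hb, norm_smul, Real.norm_eq_abs, abs_of_pos (by positivity), ← hm]
    field_simp
  have hBa : ‖b‖ ≤ a := by
    rw [hB, div_le_iff₀ hm0]
    nlinarith
  have hBn : ‖b‖ ≤ n / 2 := by linarith
  have hsub : n / 2 ≤ ‖ξ - b‖ := by
    have := norm_sub_norm_le ξ b
    rw [← hn] at this
    linarith
  have hsub0 : (0:ℝ) < ‖ξ - b‖ := by linarith
  set p : ℝ := inner ℝ b ξ with hp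
  set t : ℝ := (‖b‖ ^ 2 - 2 * p) / n ^ 2 with ht
  have hid : ‖ξ - b‖ ^ 2 = n ^ 2 * (1 + t) := by
    have h1 : ‖ξ - b‖ ^ 2 = ‖ξ‖ ^ 2 - 2 * inner ℝ ξ b + ‖b‖ ^ 2 :=
      norm_sub_sq_real ξ b
    have h2 : (inner ℝ ξ b : ℝ) = p := by rw [hp, real_inner_comm]
    rw [ht]
    field_simp
    rw [h1, h2, ← hn]
    ring
  have ht_lb : (1:ℝ)/4 ≤ 1 + t := by
    have h4 : (n / 2) ^ 2 ≤ n ^ 2 * (1 + t) := by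
      rw [← hid]; exact pow_le_pow_left₀ (by positivity) hsub 2
    nlinarith [mul_pos hn0 hn0, sq_nonneg n, h4]
  have hCS : |p| ≤ ‖b‖ * n := by
    have := abs_real_inner_le_norm b ξ
    rw [← hp, ← hn] at this; exact this
  have ht_abs : |t| ≤ 3 * ‖b‖ / n := by
    have h5 : |‖b‖ ^ 2 - 2 * p| ≤ ‖b‖ ^ 2 + 2 * |p| := by
      calc |‖b‖ ^ 2 - 2 * p| ≤ |‖b‖ ^ 2| + |2 * p| := abs_sub _ _
        _ = ‖b‖ ^ 2 + 2 * |p| := by rw [abs_of_nonneg (by positivity), abs_mul]; norm_num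
    have h6 : |‖b‖ ^ 2 - 2 * p| ≤ 3 * ‖b‖ * n := by nlinarith [norm_nonneg b]
    rw [ht, abs_div, abs_of_pos (by positivity : (0:ℝ) < n ^ 2),
      div_le_div_iff₀ (by positivity) hn0]
    have h7 := mul_le_mul_of_nonneg_right h6 (le_of_lt hn0)
    nlinarith [h7]
  -- log identity
  have hlog : Real.log (‖ξ - b‖ / n) = (1/2) * Real.log (1 + t) := by
    have h6 : (‖ξ - b‖ / n) ^ 2 = 1 + t := by
      rw [div_pow, hid]; field_simp
    have h7 : Real.log ((‖ξ - b‖ / n) ^ 2) = 2 * Real.log (‖ξ - b‖ / n) := by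
      rw [Real.log_pow]; norm_num
    rw [← h6, h7]; ring
  -- expression rewrite
  have hinner : (inner ℝ ((r * (a ^ 2 / m ^ 2)) • η) ((-K / n ^ 2) • ξ) : ℝ)
      = r * (a ^ 2 / m ^ 2) * (-K / n ^ 2) * inner ℝ η ξ := by
    rw [real_inner_smul_left, real_inner_smul_right]; ring
  have hpq : p = (a ^ 2 / m ^ 2) * inner ℝ η ξ := by
    rw [hp, hb, real_inner_smul_left]
  set E : ℝ := Real.log (‖ξ - b‖ / n) + p / n ^ 2 with hE
  have hfact : -(K) * r * Real.log (‖ξ - b‖ / n)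
      + (inner ℝ ((r * (a ^ 2 / m ^ 2)) • η) ((-K / n ^ 2) • ξ) : ℝ)
      = -(K * r) * E := by
    rw [hinner, hE, hpq]; ring
  -- bound E
  have hEval : E = (1/2) * (Real.log (1 + t) - t) + ‖b‖ ^ 2 / (2 * n ^ 2) := by
    rw [hE, hlog, ht]; field_simp; ring
  have hE1 : |E| ≤ (37/2) * ‖b‖ ^ 2 / n ^ 2 := by
    have h8 := log_sub_bound_aux ht_lb
    have h9 : t ^ 2 ≤ 9 * ‖b‖ ^ 2 / n ^ 2 := by
      have := abs_nonneg t
      have h10 : t ^ 2 = |t| ^ 2 := (sq_abs t).symm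
      rw [h10]
      calc |t| ^ 2 ≤ (3 * ‖b‖ / n) ^ 2 := pow_le_pow_left₀ (abs_nonneg t) ht_abs 2
        _ = 9 * ‖b‖ ^ 2 / n ^ 2 := by field_simp; ring
    rw [hEval]
    calc |(1/2) * (Real.log (1 + t) - t) + ‖b‖ ^ 2 / (2 * n ^ 2)|
        ≤ |(1/2) * (Real.log (1 + t) - t)| + |‖b‖ ^ 2 / (2 * n ^ 2)| := abs_add_le _ _
      _ = (1/2) * |Real.log (1 + t) - t| + ‖b‖ ^ 2 / (2 * n ^ 2) := by
          rw [abs_mul, abs_of_nonneg (by positivity : (0:ℝ) ≤ ‖b‖ ^ 2 / (2 * n ^ 2))]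
          norm_num
      _ ≤ (1/2) * (4 * t ^ 2) + ‖b‖ ^ 2 / (2 * n ^ 2) := by linarith
      _ ≤ (1/2) * (4 * (9 * ‖b‖ ^ 2 / n ^ 2)) + ‖b‖ ^ 2 / (2 * n ^ 2) := by linarith
      _ = (37/2) * ‖b‖ ^ 2 / n ^ 2 := by field_simp; ring
  -- final
  have hgoal : |(-(K) * r * Real.log (‖ξ - b‖ / n)
      + (inner ℝ ((r * (a ^ 2 / m ^ 2)) • η) ((-K / n ^ 2) • ξ) : ℝ))|
      ≤ (c * a ^ 2 * (1 + a) + 1) / (n ^ 2 * (1 + m)) := by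
    rw [hfact, abs_mul, abs_neg]
    have hB2 : ‖b‖ ^ 2 = a ^ 4 / m ^ 2 := by rw [hB]; field_simp
    have step1 : |K * r| * |E| ≤ |K * r| * ((37/2) * (a ^ 4 / m ^ 2) / n ^ 2) := by
      apply mul_le_mul_of_nonneg_left _ (abs_nonneg _)
      rw [← hB2]
      calc |E| ≤ (37/2) * ‖b‖ ^ 2 / n ^ 2 := hE1
        _ = (37/2) * ‖b‖ ^ 2 / n ^ 2 := rfl
    refine step1.trans ?_
    rw [le_div_iff₀ (by positivity : (0:ℝ) < n ^ 2 * (1 + m))]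
    have hkey : a ^ 2 * (1 + m) ≤ (1 + a) * m ^ 2 := by
      nlinarith [mul_le_mul_of_nonneg_left hη (mul_nonneg ha.le hm0.le), mul_self_le_mul_self ha.le hη]
    have hcnn : (0:ℝ) ≤ |K * r| := abs_nonneg _
    have expand : |K * r| * ((37/2) * (a ^ 4 / m ^ 2) / n ^ 2) * (n ^ 2 * (1 + m))
        = c * (a ^ 2 * (a ^ 2 * (1 + m))) / m ^ 2 := by
      rw [hc]; field_simp
    rw [expand, div_le_iff₀ (by positivity : (0:ℝ) < m ^ 2)]
    have hc0 : 0 ≤ c := by rw [hc]; positivity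
    nlinarith [mul_le_mul_of_nonneg_left hkey (mul_nonneg hc0 (by positivity : (0:ℝ) ≤ a ^2)), sq_nonneg m, sq_nonneg n]
  convert hgoal using 3 <;> rw [hK, hr] <;> ring_nf
end

section
/- Let a > 0, μ_O, μ_I > 0, κ = (μ_I−μ_O)/(μ_I+μ_O), and fix η with ‖η‖ > a. With N^O, N^I as the exterior and interior branches of the transmission Green's function for the disk of radius a (N^O(ξ) = −(1/(2πμ_O))log‖ξ−η‖ + (κ/(2πμ_O)) log(‖ξ−(a²/‖η‖²)η‖/‖ξ‖), N^I(ξ) = −((1−κ)/(2πμ_O)) log‖ξ−η‖ − (κ/(2πμ_O)) log‖η‖), the normal-derivative transmission condition holds: for every ξ with ‖ξ‖ = a, μ_O (ξ/a)·∇N^O(ξ) = μ_I (ξ/a)·∇N^I(ξ), where ∇N^O is computed from the exterior formula and ∇N^I from the interior formula. -/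
set_option maxHeartbeats 1000000
open Real
noncomputable section
local notation "E" => EuclideanSpace ℝ (Fin 2)

lemma hasFDerivAt_log_norm_sub (c ξ : E) (h : ξ ≠ c) :
    HasFDerivAt (fun z : E => Real.log ‖z - c‖)
      ((‖ξ - c‖ ^ 2)⁻¹ • (innerSL ℝ (ξ - c))) ξ := by
  have hsub : HasFDerivAt (fun z : E => z - c) (ContinuousLinearMap.id ℝ E) ξ :=
    (hasFDerivAt_id ξ).sub_const c
  have hinner := hsub.inner ℝ hsub
  have hnm : (0:ℝ) < ‖ξ - c‖ := by
    rw [norm_pos_iff]; exact sub_ne_zero.mpr h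
  have hne : (inner ℝ (ξ - c) (ξ - c) : ℝ) ≠ 0 := by
    rw [real_inner_self_eq_norm_sq]; positivity
  have hlog := (hinner.log hne).const_mul (1/2 : ℝ)
  have hfun : (fun z : E => (1/2 : ℝ) * Real.log (inner ℝ (z - c) (z - c) : ℝ))
      = fun z : E => Real.log ‖z - c‖ := by
    funext z
    rw [real_inner_self_eq_norm_sq, Real.log_pow]
    push_cast; ring
  rw [hfun] at hlog
  refine hlog.congr_fderiv ?_
  ext v
  simp only [ContinuousLinearMap.smul_apply, ContinuousLinearMap.coe_comp',
    Function.comp_apply, ContinuousLinearMap.prod_apply, ContinuousLinearMap.coe_id',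
    id_eq, fderivInnerCLM_apply, innerSL_apply_apply, smul_eq_mul,
    real_inner_self_eq_norm_sq]
  rw [real_inner_comm v (ξ - c)]
  ring

lemma hasFDerivAt_log_norm (ξ : E) (h : ξ ≠ 0) :
    HasFDerivAt (fun z : E => Real.log ‖z‖)
      ((‖ξ‖ ^ 2)⁻¹ • (innerSL ℝ ξ)) ξ := by
  have := hasFDerivAt_log_norm_sub 0 ξ (by simpa using h)
  simpa using this

/-- Traction continuity of the transmission Green's function of a circular
inclusion of radius `a` with source `η` outside: with `κ = (μI−μO)/(μI+μO)`,
for `‖ξ‖ = a`, `μO (ξ/a)·∇N^O(ξ) = μI (ξ/a)·∇N^I(ξ)`, the gradients being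
computed from the exterior resp. interior formulas. -/
theorem stmt16 (a μO μI : ℝ) (ha : 0 < a) (hμO : 0 < μO) (hμI : 0 < μI)
    (η : EuclideanSpace ℝ (Fin 2)) (hη : a < ‖η‖) :
    ∀ ξ : EuclideanSpace ℝ (Fin 2), ‖ξ‖ = a →
      μO * fderiv ℝ (fun z : EuclideanSpace ℝ (Fin 2) =>
          -(1 / (2 * π * μO)) * Real.log ‖z - η‖
            + ((μI - μO) / (μI + μO)) / (2 * π * μO) *
              Real.log (‖z - (a ^ 2 / ‖η‖ ^ 2) • η‖ / ‖z‖)) ξ (a⁻¹ • ξ)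
        = μI * fderiv ℝ (fun z : EuclideanSpace ℝ (Fin 2) =>
            -((1 - (μI - μO) / (μI + μO)) / (2 * π * μO)) * Real.log ‖z - η‖
              - ((μI - μO) / (μI + μO)) / (2 * π * μO) * Real.log ‖η‖) ξ (a⁻¹ • ξ) := by
  intro ξ hξa
  set p : E := (a ^ 2 / ‖η‖ ^ 2) • η with hp
  have hr : (0:ℝ) < ‖η‖ := lt_trans ha hη
  have hξ0 : ξ ≠ 0 := by
    intro h0; rw [h0, norm_zero] at hξa; exact ha.ne' hξa.symm
  have hξη : ξ ≠ η := by
    intro h; rw [h] at hξa; exact hη.ne hξa.symm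
  have hpnorm : ‖p‖ = a ^ 2 / ‖η‖ := by
    rw [hp, norm_smul, Real.norm_eq_abs, abs_of_pos (by positivity)]
    field_simp
  have hξp : ξ ≠ p := by
    intro h
    rw [h, hpnorm] at hξa
    have h2 : a * ‖η‖ = a * a := by
      field_simp at hξa
      nlinarith [hξa]
    have h3 := mul_left_cancel₀ ha.ne' h2
    exact hη.ne' h3
  -- derivatives
  have hDη := hasFDerivAt_log_norm_sub η ξ hξη
  have hDp := hasFDerivAt_log_norm_sub p ξ hξp
  have hD0 := hasFDerivAt_log_norm ξ hξ0
  set κ : ℝ := (μI - μO) / (μI + μO) with hκ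
  have hev : (fun z : E => Real.log (‖z - p‖ / ‖z‖))
      =ᶠ[nhds ξ] fun z : E => Real.log ‖z - p‖ - Real.log ‖z‖ := by
    have hmem : ({p}ᶜ ∩ {(0:E)}ᶜ) ∈ nhds ξ := by
      apply IsOpen.mem_nhds
      · exact (isOpen_compl_singleton).inter isOpen_compl_singleton
      · exact ⟨hξp, hξ0⟩
    filter_upwards [hmem] with z hz
    rw [Real.log_div (by simpa [sub_eq_zero] using hz.1) (by simpa using hz.2)]
  have hquot : HasFDerivAt (fun z : E => Real.log (‖z - p‖ / ‖z‖))
      ((‖ξ - p‖ ^ 2)⁻¹ • (innerSL ℝ (ξ - p)) - (‖ξ‖ ^ 2)⁻¹ • (innerSL ℝ ξ)) ξ :=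
    (hDp.sub hD0).congr_of_eventuallyEq hev
  have hO : HasFDerivAt (fun z : E =>
      -(1 / (2 * π * μO)) * Real.log ‖z - η‖
        + κ / (2 * π * μO) * Real.log (‖z - p‖ / ‖z‖))
      ((-(1 / (2 * π * μO))) • ((‖ξ - η‖ ^ 2)⁻¹ • (innerSL ℝ (ξ - η)))
        + (κ / (2 * π * μO)) • ((‖ξ - p‖ ^ 2)⁻¹ • (innerSL ℝ (ξ - p)) - (‖ξ‖ ^ 2)⁻¹ • (innerSL ℝ ξ))) ξ :=
    (hDη.const_mul _).add (hquot.const_mul _)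
  have hI : HasFDerivAt (fun z : E =>
      -((1 - κ) / (2 * π * μO)) * Real.log ‖z - η‖ - κ / (2 * π * μO) * Real.log ‖η‖)
      ((-((1 - κ) / (2 * π * μO))) • ((‖ξ - η‖ ^ 2)⁻¹ • (innerSL ℝ (ξ - η)))) ξ :=
    (hDη.const_mul _).sub_const _
  rw [hO.fderiv, hI.fderiv]
  simp only [ContinuousLinearMap.add_apply, ContinuousLinearMap.sub_apply,
    ContinuousLinearMap.smul_apply, innerSL_apply_apply, smul_eq_mul]
  -- inner product computations
  rw [real_inner_smul_right, real_inner_smul_right, real_inner_smul_right]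
  rw [inner_sub_left, inner_sub_left]
  have hinnp : (inner ℝ p ξ : ℝ) = a ^ 2 / ‖η‖ ^ 2 * inner ℝ η ξ := real_inner_smul_left η ξ _
  have hself : (inner ℝ ξ ξ : ℝ) = a ^ 2 := by
    rw [real_inner_self_eq_norm_sq, hξa]
  have hsη : ‖ξ - η‖ ^ 2 = a ^ 2 + ‖η‖ ^ 2 - 2 * inner ℝ η ξ := by
    rw [norm_sub_sq_real, hξa, real_inner_comm]; ring
  have hsp : ‖ξ - p‖ ^ 2 = a ^ 2 / ‖η‖ ^ 2 * ‖ξ - η‖ ^ 2 := by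
    rw [norm_sub_sq_real, norm_sub_sq_real, hξa, hpnorm, hp, real_inner_smul_right]
    rw [real_inner_comm ξ η] at *
    field_simp
    ring
  rw [hinnp, hself, hsη, hsp, hsη, hξa]
  set t : ℝ := inner ℝ η ξ
  set r : ℝ := ‖η‖
  have hs : a ^ 2 + r ^ 2 - 2 * t > 0 := by
    rw [← hsη]
    exact pow_pos (norm_pos_iff.mpr (sub_ne_zero.mpr hξη)) 2
  have hπ : π ≠ 0 := Real.pi_ne_zero
  rw [hκ]
  field_simp
  ring
end
end
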